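/- Let ρ be a finite positive Borel measure on ℝ and t > 1. The condition Im H_t(z) > 0 for all z in the upper half-plane, where H_t(z) = tz - (t-1)(a + z + ∫ (1+sz)/(s-z) dρ(s)), holds if and only if ρ is the zero measure. -/

import Mathlib

open MeasureTheory Complex

private lemma stmt5_im_formula (x y s : ℝ) (hy : 0 < y) :
    ((1 + (s : ℂ) * (x + y * I)) / ((s : ℂ) - (x + y * I))).im
      = y * ((1 + s ^ 2) / ((s - x) ^ 2 + y ^ 2)) := by
  have h1 : ((s : ℂ) - (x + y * I)).re = s - x := by simp
  have h2 : ((s : ℂ) - (x + y * I)).im = -y := by simp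
  have h3 : (1 + (s : ℂ) * (x + y * I)).re = 1 + s * x := by simp
  have h4 : (1 + (s : ℂ) * (x + y * I)).im = s * y := by simp
  have h5 : Complex.normSq ((s : ℂ) - (x + y * I)) = (s - x) ^ 2 + y ^ 2 := by
    rw [Complex.normSq_apply, h1, h2]; ring
  rw [Complex.div_im, h1, h2, h3, h4, h5]
  have hpos : (0 : ℝ) < (s - x) ^ 2 + y ^ 2 := by positivity
  field_simp
  ring

private lemma stmt5_integrable_f (ρ : Measure ℝ) [IsFiniteMeasure ρ] (z : ℂ)
    (hz : 0 < z.im) :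
    Integrable (fun s : ℝ => (1 + (s : ℂ) * z) / ((s : ℂ) - z)) ρ := by
  have hd : ∀ s : ℝ, (s : ℂ) - z ≠ 0 := by
    intro s h
    have := congrArg Complex.im h
    simp at this
    linarith
  have hcont : Continuous (fun s : ℝ => (1 + (s : ℂ) * z) / ((s : ℂ) - z)) := by
    apply Continuous.div (by continuity) (by continuity) hd
  refine (integrable_const (‖z‖ + ‖1 + z ^ 2‖ / z.im)).mono'
    hcont.aestronglyMeasurable ?_
  filter_upwards with s
  have key : (1 + (s : ℂ) * z) / ((s : ℂ) - z) = z + (1 + z ^ 2) / ((s : ℂ) - z) := by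
    field_simp [hd s]
    ring
  rw [key]
  have hle : z.im ≤ ‖(s : ℂ) - z‖ := by
    have h1 := Complex.abs_im_le_norm ((s : ℂ) - z)
    rw [Complex.sub_im, Complex.ofReal_im, zero_sub, abs_neg] at h1
    exact (le_abs_self _).trans h1
  have h1 : ‖(1 + z ^ 2) / ((s : ℂ) - z)‖ ≤ ‖1 + z ^ 2‖ / z.im := by
    rw [norm_div]
    gcongr
  calc ‖z + (1 + z ^ 2) / ((s : ℂ) - z)‖ ≤ ‖z‖ + ‖(1 + z ^ 2) / ((s : ℂ) - z)‖ :=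
        norm_add_le _ _
    _ ≤ ‖z‖ + ‖1 + z ^ 2‖ / z.im := by linarith

private lemma stmt5_integrable_g (ρ : Measure ℝ) [IsFiniteMeasure ρ] (x y : ℝ)
    (hy : 0 < y) :
    Integrable (fun s : ℝ => (1 + s ^ 2) / ((s - x) ^ 2 + y ^ 2)) ρ := by
  have hcont : Continuous (fun s : ℝ => (1 + s ^ 2) / ((s - x) ^ 2 + y ^ 2)) := by
    apply Continuous.div (by continuity) (by continuity)
    intro s
    positivity
  refine (integrable_const ((1 + 2 * x ^ 2) / y ^ 2 + 2)).mono'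
    hcont.aestronglyMeasurable ?_
  filter_upwards with s
  have hD : (0 : ℝ) < (s - x) ^ 2 + y ^ 2 := by positivity
  rw [Real.norm_of_nonneg (by positivity), div_le_iff₀ hD]
  have h1 : (1 + 2 * x ^ 2) / y ^ 2 * y ^ 2 = 1 + 2 * x ^ 2 := by
    field_simp
  nlinarith [sq_nonneg (s - 2 * x), sq_nonneg (s - x),
    mul_nonneg (div_nonneg (by positivity : (0:ℝ) ≤ 1 + 2 * x ^ 2) (sq_nonneg y)) (sq_nonneg (s - x))]

theorem stmt_5 (ρ : Measure ℝ) [IsFiniteMeasure ρ] (a t : ℝ) (ht : 1 < t) :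
    (∀ z : ℂ, 0 < z.im →
        0 < ((t : ℂ) * z - ((t : ℂ) - 1) *
          ((a : ℂ) + z + ∫ s : ℝ, (1 + (s : ℂ) * z) / ((s : ℂ) - z) ∂ρ)).im)
      ↔ ρ = 0 := by
  have ht1 : (0 : ℝ) < t - 1 := by linarith
  constructor
  · intro h
    -- Step A: the key integral bound
    have key : ∀ x y : ℝ, 0 < y →
        ∫ s, (1 + s ^ 2) / ((s - x) ^ 2 + y ^ 2) ∂ρ ≤ 1 / (t - 1) := by
      intro x y hy
      set z : ℂ := x + y * I with hzdef
      have hzim : z.im = y := by simp [hzdef]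
      have h0 := h z (by rw [hzim]; exact hy)
      have hint := stmt5_integrable_f ρ z (by rw [hzim]; exact hy)
      have him : (∫ s : ℝ, (1 + (s : ℂ) * z) / ((s : ℂ) - z) ∂ρ).im
          = y * ∫ s, (1 + s ^ 2) / ((s - x) ^ 2 + y ^ 2) ∂ρ := by
        have hI := integral_im (𝕜 := ℂ) (μ := ρ) hint
        simp only [RCLike.im_to_complex] at hI
        rw [← hI, ← integral_const_mul]
        congr 1
        funext s
        simpa [hzdef] using stmt5_im_formula x y s hy
      set Ig : ℝ := ∫ s, (1 + s ^ 2) / ((s - x) ^ 2 + y ^ 2) ∂ρ with hIg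
      simp only [Complex.sub_im, Complex.sub_re, Complex.mul_im, Complex.add_im,
        Complex.ofReal_re, Complex.ofReal_im, Complex.one_im, Complex.one_re, him, hzim,
        zero_mul, mul_zero, sub_zero, zero_sub, sub_self, zero_add, add_zero, neg_zero] at h0
      have hlt : (t - 1) * Ig < 1 := by nlinarith
      have : Ig < 1 / (t - 1) := by
        rw [lt_div_iff₀ ht1]
        linarith [mul_comm Ig (t - 1)]
      exact this.le
    -- Step B: interval bound
    have hIcc : ∀ x δ : ℝ, 0 < δ →
        (ρ (Set.Icc (x - δ) (x + δ))).toReal ≤ δ ^ 2 / (t - 1) := by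
      intro x δ hδ
      have hstep : ∀ y : ℝ, 0 < y →
          (ρ (Set.Icc (x - δ) (x + δ))).toReal ≤ (δ ^ 2 + y ^ 2) / (t - 1) := by
        intro y hy
        have hg := stmt5_integrable_g ρ x y hy
        have hDy : (0 : ℝ) < δ ^ 2 + y ^ 2 := by positivity
        have h1 : (ρ (Set.Icc (x - δ) (x + δ))).toReal * (1 / (δ ^ 2 + y ^ 2))
            ≤ ∫ s in Set.Icc (x - δ) (x + δ), (1 + s ^ 2) / ((s - x) ^ 2 + y ^ 2) ∂ρ := by
          have := setIntegral_const (μ := ρ) (s := Set.Icc (x - δ) (x + δ))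
            (1 / (δ ^ 2 + y ^ 2))
          rw [smul_eq_mul, measureReal_def] at this
          rw [← this]
          refine setIntegral_mono_on (integrable_const _).integrableOn
            hg.integrableOn measurableSet_Icc ?_
          intro s hs
          obtain ⟨hs1, hs2⟩ := hs
          have h2 : (s - x) ^ 2 ≤ δ ^ 2 := by nlinarith
          exact div_le_div₀ (by positivity) (by nlinarith [sq_nonneg s])
            (by positivity) (by nlinarith)
        have h2 : ∫ s in Set.Icc (x - δ) (x + δ), (1 + s ^ 2) / ((s - x) ^ 2 + y ^ 2) ∂ρ
            ≤ ∫ s, (1 + s ^ 2) / ((s - x) ^ 2 + y ^ 2) ∂ρ := by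
          refine setIntegral_le_integral hg ?_
          filter_upwards with s
          positivity
        have h3 := (h1.trans h2).trans (key x y hy)
        calc (ρ (Set.Icc (x - δ) (x + δ))).toReal
            = (ρ (Set.Icc (x - δ) (x + δ))).toReal * (1 / (δ ^ 2 + y ^ 2)) * (δ ^ 2 + y ^ 2) := by
              field_simp
          _ ≤ 1 / (t - 1) * (δ ^ 2 + y ^ 2) := by
              apply mul_le_mul_of_nonneg_right h3 hDy.le
          _ = (δ ^ 2 + y ^ 2) / (t - 1) := by ring
      refine le_of_forall_pos_le_add ?_
      intro ε hε
      have hsq : (0 : ℝ) < ε * (t - 1) := by positivity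
      have hy : (0 : ℝ) < Real.sqrt (ε * (t - 1)) := Real.sqrt_pos.2 hsq
      have h4 := hstep _ hy
      rw [Real.sq_sqrt hsq.le] at h4
      calc (ρ (Set.Icc (x - δ) (x + δ))).toReal ≤ (δ ^ 2 + ε * (t - 1)) / (t - 1) := h4
        _ = δ ^ 2 / (t - 1) + ε := by field_simp
    -- toReal union bound helper
    have union_bound : ∀ A B : Set ℝ, (ρ (A ∪ B)).toReal ≤ (ρ A).toReal + (ρ B).toReal := by
      intro A B
      rw [← ENNReal.toReal_add (measure_ne_top ρ A) (measure_ne_top ρ B)]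
      exact ENNReal.toReal_mono
        (by simp [ENNReal.add_ne_top, measure_ne_top]) (measure_union_le A B)
    -- Step C: covering induction
    have claim : ∀ k : ℕ, ∀ u δ : ℝ, 0 < δ →
        (ρ (Set.Icc u (u + 2 * δ * ((k : ℝ) + 1)))).toReal ≤ ((k : ℝ) + 1) * (δ ^ 2 / (t - 1)) := by
      intro k
      induction k with
      | zero =>
        intro u δ hδ
        have heq : Set.Icc u (u + 2 * δ * ((0 : ℕ) + 1 : ℝ))
            = Set.Icc ((u + δ) - δ) ((u + δ) + δ) := by
          congr 1 <;> push_cast <;> ring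
        rw [heq]
        simpa using hIcc (u + δ) δ hδ
      | succ k ih =>
        intro u δ hδ
        have hle1 : u ≤ u + 2 * δ * ((k : ℝ) + 1) := by nlinarith [Nat.cast_nonneg (α := ℝ) k]
        have hle2 : u + 2 * δ * ((k : ℝ) + 1) ≤ u + 2 * δ * (((k : ℕ) + 1 : ℕ) + 1 : ℝ) := by
          push_cast
          nlinarith
        have hsplit : Set.Icc u (u + 2 * δ * (((k : ℕ) + 1 : ℕ) + 1 : ℝ))
            = Set.Icc u (u + 2 * δ * ((k : ℝ) + 1))
              ∪ Set.Icc (u + 2 * δ * ((k : ℝ) + 1)) (u + 2 * δ * (((k : ℕ) + 1 : ℕ) + 1 : ℝ)) := by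
          rw [Set.Icc_union_Icc_eq_Icc hle1 hle2]
        rw [hsplit]
        have hB : (ρ (Set.Icc (u + 2 * δ * ((k : ℝ) + 1))
            (u + 2 * δ * (((k : ℕ) + 1 : ℕ) + 1 : ℝ)))).toReal ≤ δ ^ 2 / (t - 1) := by
          have heq : Set.Icc (u + 2 * δ * ((k : ℝ) + 1)) (u + 2 * δ * (((k : ℕ) + 1 : ℕ) + 1 : ℝ))
              = Set.Icc ((u + 2 * δ * ((k : ℝ) + 1) + δ) - δ) ((u + 2 * δ * ((k : ℝ) + 1) + δ) + δ) := by
            push_cast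
            congr 1 <;> ring
          rw [heq]
          exact hIcc _ δ hδ
        calc (ρ (Set.Icc u (u + 2 * δ * ((k : ℝ) + 1))
              ∪ Set.Icc (u + 2 * δ * ((k : ℝ) + 1)) (u + 2 * δ * (((k : ℕ) + 1 : ℕ) + 1 : ℝ)))).toReal
            ≤ (ρ (Set.Icc u (u + 2 * δ * ((k : ℝ) + 1)))).toReal
              + (ρ (Set.Icc (u + 2 * δ * ((k : ℝ) + 1))
                (u + 2 * δ * (((k : ℕ) + 1 : ℕ) + 1 : ℝ)))).toReal := union_bound _ _
          _ ≤ ((k : ℝ) + 1) * (δ ^ 2 / (t - 1)) + δ ^ 2 / (t - 1) := by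
              exact add_le_add (ih u δ hδ) hB
          _ = (((k : ℕ) + 1 : ℕ) + 1 : ℝ) * (δ ^ 2 / (t - 1)) := by push_cast; ring
    -- ρ of big intervals is zero
    have hIccn : ∀ n : ℕ, ρ (Set.Icc (-(n : ℝ) - 1) ((n : ℝ) + 1)) = 0 := by
      intro n
      set m : ℝ := (n : ℝ) + 1 with hm
      have hm0 : 0 < m := by positivity
      have hto : (ρ (Set.Icc (-m) m)).toReal = 0 := by
        refine le_antisymm ?_ ENNReal.toReal_nonneg
        have hall : ∀ ε > (0 : ℝ), (ρ (Set.Icc (-m) m)).toReal ≤ ε := by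
          intro ε hε
          obtain ⟨k, hk'⟩ := exists_nat_gt (m ^ 2 / ((t - 1) * ε))
          have hk1 : (0 : ℝ) < (k : ℝ) + 1 := by positivity
          have hδ : 0 < m / ((k : ℝ) + 1) := by positivity
          have h2 := claim k (-m) (m / ((k : ℝ) + 1)) hδ
          have heq : -m + 2 * (m / ((k : ℝ) + 1)) * ((k : ℝ) + 1) = m := by
            field_simp
            ring
          rw [heq] at h2
          have heq2 : ((k : ℝ) + 1) * ((m / ((k : ℝ) + 1)) ^ 2 / (t - 1))
              = m ^ 2 / (((k : ℝ) + 1) * (t - 1)) := by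
            field_simp
          rw [heq2] at h2
          refine h2.trans ?_
          rw [div_le_iff₀ (by positivity)]
          have hmk : m ^ 2 < (k : ℝ) * ((t - 1) * ε) := by
            rw [div_lt_iff₀ (by positivity)] at hk'
            linarith
          nlinarith
        refine le_of_forall_pos_le_add ?_
        intro ε hε
        exact (hall ε hε).trans (by linarith)
      have := (ENNReal.toReal_eq_zero_iff _).1 hto
      rcases this with h0 | htop
      · have : Set.Icc (-(n : ℝ) - 1) ((n : ℝ) + 1) = Set.Icc (-m) m := by
          rw [hm]; congr 1; ring
        rw [this]
        exact h0
      · exact absurd htop (measure_ne_top ρ _)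
    -- conclude
    have hcover : (Set.univ : Set ℝ) ⊆ ⋃ n : ℕ, Set.Icc (-(n : ℝ) - 1) ((n : ℝ) + 1) := by
      intro s _
      obtain ⟨n, hn⟩ := exists_nat_gt |s|
      refine Set.mem_iUnion.2 ⟨n, ?_⟩
      have h1 := abs_lt.1 hn
      constructor <;> [linarith [h1.1]; linarith [h1.2]]
    have huniv : ρ Set.univ = 0 :=
      measure_mono_null hcover (measure_iUnion_null fun n => hIccn n)
    exact Measure.measure_univ_eq_zero.1 huniv
  · intro hρ z hz
    subst hρ
    simp only [integral_zero_measure, add_zero, Complex.sub_im, Complex.mul_im,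
      Complex.add_im, Complex.ofReal_re, Complex.ofReal_im, Complex.one_im,
      Complex.one_re, Complex.sub_re, Complex.ofReal_re]
    nlinarith [hz]
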